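/- Let (X, μ) be a σ-finite measure space, P(x) density matrices on finite-dimensional H with ∫ P(x) dμ(x) = I, and suppose ρ = ∫ p(x) P(x) dμ(x) for a bounded probability density p. Then for every concave f : [0, sup p] → ℝ with f(0)=0: ∫ f(p(x)) dμ(x) ≤ Tr f(ρ). -/

import Mathlib

open Set Matrix MeasureTheory
open scoped ComplexOrder

/-- `Tr f(σ)` via functional calculus: the sum of `f` over the eigenvalues of a
Hermitian matrix `σ` (and `0` if `σ` is not Hermitian). -/
noncomputable def trF {n : ℕ} (f : ℝ → ℝ) (σ : Matrix (Fin n) (Fin n) ℂ) : ℝ :=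
  if h : σ.IsHermitian then ∑ i, f (h.eigenvalues i) else 0

/-- A density matrix: positive semidefinite with unit trace. -/
def IsDensityMatrix {n : ℕ} (σ : Matrix (Fin n) (Fin n) ℂ) : Prop :=
  σ.PosSemidef ∧ σ.trace = 1

lemma jensen_aux {X : Type*} [MeasurableSpace X] (μ : Measure X)
    (p q : X → ℝ) (M : ℝ)
    (hp0 : ∀ x, 0 ≤ p x) (hpM : ∀ x, p x ≤ M)
    (hq0 : ∀ x, 0 ≤ q x)
    (hqint : Integrable q μ) (hq1 : ∫ x, q x ∂μ = 1)
    (hpq : Integrable (fun x => p x * q x) μ)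
    (f : ℝ → ℝ) (hf : ConcaveOn ℝ (Icc (0:ℝ) M) f) (hf0 : f 0 = 0)
    (hfq : Integrable (fun x => f (p x) * q x) μ) :
    ∫ x, f (p x) * q x ∂μ ≤ f (∫ x, p x * q x ∂μ) := by
  set c := ∫ x, p x * q x ∂μ with hc
  have hc0 : 0 ≤ c := integral_nonneg fun x => mul_nonneg (hp0 x) (hq0 x)
  have hcM : c ≤ M := by
    have h1 : ∫ x, p x * q x ∂μ ≤ ∫ x, M * q x ∂μ :=
      integral_mono hpq (hqint.const_mul M)
        (fun x => mul_le_mul_of_nonneg_right (hpM x) (hq0 x))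
    have h2 : ∫ x, M * q x ∂μ = M := by rw [integral_const_mul _ _, hq1, mul_one]
    linarith
  rcases eq_or_lt_of_le hc0 with h0 | h0
  · have hzero : (fun x => p x * q x) =ᵐ[μ] 0 :=
      (integral_eq_zero_iff_of_nonneg (fun x => mul_nonneg (hp0 x) (hq0 x)) hpq).mp h0.symm
    have : (fun x => f (p x) * q x) =ᵐ[μ] 0 := by
      filter_upwards [hzero] with x hx
      rcases mul_eq_zero.mp hx with h | h
      · simp [h, hf0]
      · simp [h]
    rw [integral_congr_ae this, ← h0]
    simp [hf0]
  rcases eq_or_lt_of_le hcM with hM0 | hM0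
  · have hint : Integrable (fun x => (M - p x) * q x) μ := by
      have : (fun x => (M - p x) * q x) = fun x => M * q x - p x * q x := by
        funext x; ring
      rw [this]; exact (hqint.const_mul M).sub hpq
    have hz : ∫ x, (M - p x) * q x ∂μ = 0 := by
      have : ∫ x, (M - p x) * q x ∂μ = ∫ x, (M * q x - p x * q x) ∂μ := by
        congr 1; funext x; ring
      rw [this, integral_sub (hqint.const_mul M) hpq, integral_const_mul _ _, hq1]
      rw [← hc, ← hM0]; ring
    have hzero : (fun x => (M - p x) * q x) =ᵐ[μ] 0 :=
      (integral_eq_zero_iff_of_nonneg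
        (fun x => mul_nonneg (by linarith [hpM x]) (hq0 x)) hint).mp hz
    have heq : (fun x => f (p x) * q x) =ᵐ[μ] fun x => f M * q x := by
      filter_upwards [hzero] with x hx
      rcases mul_eq_zero.mp hx with h | h
      · have : p x = M := by linarith
        rw [this]
      · simp [h]
    rw [integral_congr_ae heq, integral_const_mul _ _, hq1, mul_one, ← hM0]
  · set S : Set ℝ := (fun t => (f c - f t) / (c - t)) '' Ico 0 c with hS
    have hSne : S.Nonempty := ⟨_, ⟨0, ⟨le_refl _, h0⟩, rfl⟩⟩
    have hlow : ∀ t ∈ Ico (0:ℝ) c, (f M - f c) / (M - c) ≤ (f c - f t) / (c - t) := by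
      intro t ht
      exact hf.slope_anti_adjacent ⟨ht.1, le_trans ht.2.le hcM⟩
        ⟨by linarith [ht.1, h0], le_refl M⟩ ht.2 hM0
    have hbdd : BddBelow S := by
      refine ⟨(f M - f c) / (M - c), ?_⟩
      rintro r ⟨t, ht, rfl⟩
      exact hlow t ht
    set s := sInf S with hs
    have key : ∀ t, t ∈ Icc (0:ℝ) M → f t ≤ f c + s * (t - c) := by
      intro t ht
      rcases lt_trichotomy t c with hlt | heq | hgt
      · have hle : s ≤ (f c - f t) / (c - t) :=
          csInf_le hbdd ⟨t, ⟨ht.1, hlt⟩, rfl⟩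
        have hpos : 0 < c - t := by linarith
        have := (le_div_iff₀ hpos).mp hle
        nlinarith
      · rw [heq]; simp
      · have hge : (f t - f c) / (t - c) ≤ s := by
          apply le_csInf hSne
          rintro r ⟨w, hw, rfl⟩
          exact hf.slope_anti_adjacent ⟨hw.1, le_trans hw.2.le hcM⟩ ht hw.2 hgt
        have hpos : 0 < t - c := by linarith
        have := (div_le_iff₀ hpos).mp hge
        nlinarith
    have hrhsint : Integrable (fun x => (f c + s * (p x - c)) * q x) μ := by
      have : (fun x => (f c + s * (p x - c)) * q x)
          = fun x => (f c - s * c) * q x + s * (p x * q x) := by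
        funext x; ring
      rw [this]
      exact (hqint.const_mul _).add (hpq.const_mul s)
    have hmono : ∫ x, f (p x) * q x ∂μ ≤ ∫ x, (f c + s * (p x - c)) * q x ∂μ := by
      apply integral_mono hfq hrhsint
      intro x
      exact mul_le_mul_of_nonneg_right (key (p x) ⟨hp0 x, hpM x⟩) (hq0 x)
    have hcomp : ∫ x, (f c + s * (p x - c)) * q x ∂μ = f c := by
      have h1 : (fun x => (f c + s * (p x - c)) * q x)
          = fun x => (f c - s * c) * q x + s * (p x * q x) := by
        funext x; ring
      rw [h1, integral_add ((hqint.const_mul _)) (hpq.const_mul s),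
        integral_const_mul _ _, integral_const_mul _ _, hq1, ← hc]
      ring
    linarith

theorem lower_berezin_lieb
    {d : ℕ} {X : Type*} [MeasurableSpace X] (μ : Measure X) [SigmaFinite μ]
    (P : X → Matrix (Fin d) (Fin d) ℂ)
    (hPdm : ∀ x, IsDensityMatrix (P x))
    (hPint : ∀ i j, Integrable (fun x => P x i j) μ)
    (hPres : ∀ i j, ∫ x, P x i j ∂μ = (1 : Matrix (Fin d) (Fin d) ℂ) i j)
    (p : X → ℝ) (hp0 : ∀ x, 0 ≤ p x) (M : ℝ) (hM : 1 ≤ M) (hpM : ∀ x, p x ≤ M)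
    (hpint : Integrable p μ) (hp1 : ∫ x, p x ∂μ = 1)
    (ρ : Matrix (Fin d) (Fin d) ℂ) (hρ : IsDensityMatrix ρ)
    (hρrep : ∀ i j, ρ i j = ∫ x, (p x : ℂ) * P x i j ∂μ)
    (f : ℝ → ℝ) (hf : ConcaveOn ℝ (Icc (0:ℝ) M) f) (hf0 : f 0 = 0)
    (hfint : Integrable (fun x => f (p x)) μ) :
    (∫ x, f (p x) ∂μ) ≤ trF f ρ := by
  classical
  have hH : ρ.IsHermitian := hρ.1.1
  set u : Fin d → (Fin d → ℂ) := fun i => ⇑(hH.eigenvectorBasis i) with hu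
  -- generic quadratic-form rearrangement
  have hrearr : ∀ (A : Matrix (Fin d) (Fin d) ℂ) (v : Fin d → ℂ),
      dotProduct (star v) (A *ᵥ v)
        = ∑ j, ∑ k, (starRingEnd ℂ) (v j) * v k * A j k := by
    intro A v
    simp only [dotProduct, Matrix.mulVec, Pi.star_apply, RCLike.star_def,
      Finset.mul_sum]
    exact Finset.sum_congr rfl fun j _ => Finset.sum_congr rfl fun k _ => by ring
  set Q : Fin d → X → ℂ := fun i x => dotProduct (star (u i)) (P x *ᵥ u i) with hQdef
  set q : Fin d → X → ℝ := fun i x => (Q i x).re with hqdef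
  -- Q is real and nonnegative
  have hQreal : ∀ i x, Q i x = ((q i x : ℝ) : ℂ) := by
    intro i x
    have h : (0 : ℂ) ≤ Q i x := (hPdm x).1.dotProduct_mulVec_nonneg (u i)
    rw [Complex.nonneg_iff] at h
    apply Complex.ext
    · simp [hqdef]
    · simp [hqdef, ← h.2]
  have hq0 : ∀ i x, 0 ≤ q i x := by
    intro i x
    have h : (0 : ℂ) ≤ Q i x := (hPdm x).1.dotProduct_mulVec_nonneg (u i)
    rw [Complex.nonneg_iff] at h
    exact h.1
  -- trace identity : ∑ i, ⟨u i, A u i⟩ = tr A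
  set U : Matrix (Fin d) (Fin d) ℂ := (hH.eigenvectorUnitary : Matrix (Fin d) (Fin d) ℂ)
    with hUdef
  have hUapp : ∀ a b, U a b = u b a := fun a b => hH.eigenvectorUnitary_apply a b
  have hUU : U * star U = 1 := (Unitary.mem_iff.mp hH.eigenvectorUnitary.2).2
  have htrace : ∀ A : Matrix (Fin d) (Fin d) ℂ,
      ∑ i, dotProduct (star (u i)) (A *ᵥ u i) = A.trace := by
    intro A
    have h1 : ∀ i, dotProduct (star (u i)) (A *ᵥ u i) = (star U * A * U) i i := by
      intro i
      rw [hrearr]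
      simp only [Matrix.mul_apply, Matrix.star_apply, Finset.sum_mul]
      conv_rhs => rw [Finset.sum_comm]
      refine Finset.sum_congr rfl fun j _ => Finset.sum_congr rfl fun k _ => ?_
      rw [hUapp j i, hUapp k i, RCLike.star_def]
      ring
    calc ∑ i, dotProduct (star (u i)) (A *ᵥ u i)
        = (star U * A * U).trace := Finset.sum_congr rfl fun i _ => h1 i
      _ = A.trace := by
          rw [Matrix.trace_mul_cycle, hUU, Matrix.one_mul]
  -- ∑ i, q i x = 1
  have hqsum : ∀ x, ∑ i, q i x = 1 := by
    intro x
    have h : ∑ i, Q i x = (P x).trace := htrace (P x)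
    rw [(hPdm x).2] at h
    have h2 : ((∑ i, q i x : ℝ) : ℂ) = 1 := by
      push_cast
      rw [← h]
      exact Finset.sum_congr rfl fun i _ => (hQreal i x).symm
    exact_mod_cast h2
  have hq1b : ∀ i x, q i x ≤ 1 := by
    intro i x
    calc q i x ≤ ∑ j, q j x :=
          Finset.single_le_sum (fun j _ => hq0 j x) (Finset.mem_univ i)
      _ = 1 := hqsum x
  -- integrability of Q and q
  have hQexp : ∀ i, Q i = fun x => ∑ j, ∑ k, (starRingEnd ℂ) (u i j) * u i k * P x j k :=
    fun i => funext fun x => hrearr (P x) (u i)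
  have hQint : ∀ i, Integrable (Q i) μ := by
    intro i
    rw [hQexp i]
    exact integrable_finset_sum _ fun j _ =>
      integrable_finset_sum _ fun k _ => (hPint j k).const_mul _
  have hqint : ∀ i, Integrable (q i) μ := by
    intro i
    have := (hQint i).re
    simpa [hqdef] using this
  -- ∫ q i = 1
  have hq_one : ∀ i, ∫ x, q i x ∂μ = 1 := by
    intro i
    have hnorm : dotProduct (star (u i)) (u i) = 1 := by
      have h2 : (inner ℂ (hH.eigenvectorBasis i) (hH.eigenvectorBasis i) : ℂ) = 1 := by
        rw [inner_self_eq_norm_sq_to_K, hH.eigenvectorBasis.orthonormal.1 i]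
        norm_num
      exact (dotProduct_comm _ _).trans ((EuclideanSpace.inner_eq_star_dotProduct _ _).symm.trans h2)
    have hQ1 : ∫ x, Q i x ∂μ = 1 := by
      calc ∫ x, Q i x ∂μ
          = ∫ x, ∑ j, ∑ k, (starRingEnd ℂ) (u i j) * u i k * P x j k ∂μ := by
            rw [hQexp i]
        _ = ∑ j, ∑ k, (starRingEnd ℂ) (u i j) * u i k * ∫ x, P x j k ∂μ := by
            rw [integral_finset_sum _ (fun j _ =>
              integrable_finset_sum _ fun k _ => (hPint j k).const_mul _)]
            refine Finset.sum_congr rfl fun j _ => ?_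
            rw [integral_finset_sum _ (fun k _ => (hPint j k).const_mul _)]
            exact Finset.sum_congr rfl fun k _ => integral_const_mul _ _
        _ = ∑ j, ∑ k, (starRingEnd ℂ) (u i j) * u i k * (1 : Matrix (Fin d) (Fin d) ℂ) j k := by
            refine Finset.sum_congr rfl fun j _ => Finset.sum_congr rfl fun k _ => ?_
            rw [hPres j k]
        _ = dotProduct (star (u i)) ((1 : Matrix (Fin d) (Fin d) ℂ) *ᵥ u i) :=
            (hrearr _ _).symm
        _ = 1 := by rw [Matrix.one_mulVec, hnorm]
    have h2 : ∫ x, Q i x ∂μ = ((∫ x, q i x ∂μ : ℝ) : ℂ) := by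
      rw [show Q i = fun x => ((q i x : ℝ) : ℂ) from funext (hQreal i)]
      exact integral_ofReal
    rw [h2] at hQ1
    exact_mod_cast hQ1
  -- eigenvalues as integrals
  have hpC : AEStronglyMeasurable (fun x => (p x : ℂ)) μ :=
    Complex.continuous_ofReal.comp_aestronglyMeasurable hpint.1
  have hpPint : ∀ j k, Integrable (fun x => (p x : ℂ) * P x j k) μ := by
    intro j k
    refine (hPint j k).bdd_mul (c := M) hpC ?_
    filter_upwards with x
    rw [Complex.norm_real, Real.norm_eq_abs, abs_of_nonneg (hp0 x)]
    exact hpM x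
  have hlam : ∀ i, hH.eigenvalues i = ∫ x, p x * q i x ∂μ := by
    intro i
    have h1 : dotProduct (star (u i)) (ρ *ᵥ u i)
        = ((hH.eigenvalues i : ℝ) : ℂ) := by
      rw [show ρ *ᵥ u i = hH.eigenvalues i • u i from hH.mulVec_eigenvectorBasis i,
        dotProduct_smul]
      have hnorm : dotProduct (star (u i)) (u i) = 1 := by
        have h2 : (inner ℂ (hH.eigenvectorBasis i) (hH.eigenvectorBasis i) : ℂ) = 1 := by
          rw [inner_self_eq_norm_sq_to_K, hH.eigenvectorBasis.orthonormal.1 i]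
          norm_num
        exact (dotProduct_comm _ _).trans ((EuclideanSpace.inner_eq_star_dotProduct _ _).symm.trans h2)
      rw [hnorm, Complex.real_smul, mul_one]
    have h2 : dotProduct (star (u i)) (ρ *ᵥ u i)
        = ∫ x, ((p x * q i x : ℝ) : ℂ) ∂μ := by
      calc dotProduct (star (u i)) (ρ *ᵥ u i)
          = ∑ j, ∑ k, (starRingEnd ℂ) (u i j) * u i k * ρ j k := hrearr ρ (u i)
        _ = ∑ j, ∑ k, ∫ x, (starRingEnd ℂ) (u i j) * u i k * ((p x : ℂ) * P x j k) ∂μ := by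
            refine Finset.sum_congr rfl fun j _ => Finset.sum_congr rfl fun k _ => ?_
            rw [hρrep j k, ← integral_const_mul]
        _ = ∫ x, ∑ j, ∑ k, (starRingEnd ℂ) (u i j) * u i k * ((p x : ℂ) * P x j k) ∂μ := by
            rw [integral_finset_sum _ fun j _ =>
              integrable_finset_sum _ fun k _ => (hpPint j k).const_mul _]
            exact Finset.sum_congr rfl fun j _ =>
              (integral_finset_sum _ fun k _ => (hpPint j k).const_mul _).symm
        _ = ∫ x, (p x : ℂ) * Q i x ∂μ := by
            congr 1; funext x
            rw [hQexp i]
            simp only [Finset.mul_sum]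
            exact Finset.sum_congr rfl fun j _ => Finset.sum_congr rfl fun k _ => by ring
        _ = ∫ x, ((p x * q i x : ℝ) : ℂ) ∂μ := by
            congr 1; funext x
            rw [hQreal i x]
            push_cast
            ring
    have h3 := h1.symm.trans h2
    have h4 : ∫ x, ((p x * q i x : ℝ) : ℂ) ∂μ = ((∫ x, p x * q i x ∂μ : ℝ) : ℂ) :=
      integral_ofReal
    rw [h4] at h3
    exact_mod_cast h3
  -- integrability of products
  have hpq : ∀ i, Integrable (fun x => p x * q i x) μ := by
    intro i
    refine (hqint i).bdd_mul (c := M) hpint.1 ?_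
    filter_upwards with x
    rw [Real.norm_eq_abs, abs_of_nonneg (hp0 x)]
    exact hpM x
  have hfq : ∀ i, Integrable (fun x => f (p x) * q i x) μ := by
    intro i
    have h := hfint.bdd_mul (c := 1) (hqint i).1 ?_
    · simpa [mul_comm] using h
    · filter_upwards with x
      rw [Real.norm_eq_abs, abs_of_nonneg (hq0 i x)]
      exact hq1b i x
  -- Jensen per eigenvalue
  have hjensen : ∀ i, ∫ x, f (p x) * q i x ∂μ ≤ f (hH.eigenvalues i) := by
    intro i
    rw [hlam i]
    exact jensen_aux μ p (q i) M hp0 hpM (hq0 i) (hqint i) (hq_one i) (hpq i) f hf hf0 (hfq i)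
  -- assemble
  have hsplit : ∫ x, f (p x) ∂μ = ∑ i, ∫ x, f (p x) * q i x ∂μ := by
    rw [← integral_finset_sum _ fun i _ => hfq i]
    congr 1; funext x
    rw [← Finset.mul_sum, hqsum x, mul_one]
  rw [trF, dif_pos hH, hsplit]
  exact Finset.sum_le_sum fun i _ => hjensen i
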